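/- Let G be a graph with a secret sharing scheme on it: discrete random variables ξ (the secret, with H(ξ) > 0) and S_v for each vertex v, such that for every edge uv the secret ξ is a deterministic function of (S_u, S_v), and for every independent set A the secret ξ is independent of (S_v)_{v∈A}. Define f(A) = H((S_v)_{v∈A}) / H(ξ). Then f satisfies: f(∅)=0, f is monotone, f is submodular, f(A) ≥ f(B)+1 whenever B ⊆ A, A contains an edge and B is independent, and f(A)+f(B) ≥ f(A∪B)+f(A∩B)+1 whenever A and B each contain an edge but A∩B is independent. -/

import Mathlib

open scoped Classical

/-- Shannon entropy of the (discrete, finite-range) random variable `X` on the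
finite probability space `(Ω, p)`. -/
noncomputable def entr {Ω S : Type*} [Fintype Ω] [DecidableEq S]
    (p : Ω → ℝ) (X : Ω → S) : ℝ :=
  ∑ s ∈ Finset.univ.image X,
    Real.negMulLog (∑ ω ∈ Finset.univ.filter (fun ω => X ω = s), p ω)

/-- The joint random variable formed by the shares of the vertices in `A`. -/
def joint {V Ω T : Type*} (S : V → Ω → T) (A : Finset V) (ω : Ω) :
    {x // x ∈ A} → T :=
  fun a => S a.1 ω

/-- A set of vertices is qualified if it contains both endpoints of an edge. -/
def Qualified {V : Type*} (G : SimpleGraph V) (A : Finset V) : Prop :=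
  ∃ u ∈ A, ∃ v ∈ A, G.Adj u v

namespace EM

variable {Ω : Type*} [Fintype Ω] {p : Ω → ℝ}

noncomputable def mass {Ω α : Type*} [Fintype Ω] [DecidableEq α]
    (p : Ω → ℝ) (X : Ω → α) (a : α) : ℝ :=
  ∑ ω ∈ Finset.univ.filter (fun ω => X ω = a), p ω

lemma mass_nonneg (hp : ∀ ω, 0 ≤ p ω) {α : Type*} [DecidableEq α] (X : Ω → α) (a : α) :
    0 ≤ mass p X a := Finset.sum_nonneg fun ω _ => hp ω

lemma le_mass (hp : ∀ ω, 0 ≤ p ω) {α : Type*} [DecidableEq α] (X : Ω → α) (ω : Ω) :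
    p ω ≤ mass p X (X ω) :=
  Finset.single_le_sum (fun i _ => hp i) (by simp)

lemma mass_le_mass (hp : ∀ ω, 0 ≤ p ω) {α β : Type*} [DecidableEq α] [DecidableEq β]
    {X : Ω → α} {Y : Ω → β} {a : α} {b : β} (h : ∀ ω, X ω = a → Y ω = b) :
    mass p X a ≤ mass p Y b :=
  Finset.sum_le_sum_of_subset_of_nonneg
    (by intro ω hω; simp only [Finset.mem_filter, Finset.mem_univ, true_and] at *; exact h ω hω)
    (fun i _ _ => hp i)

lemma sum_mass_le (hp : ∀ ω, 0 ≤ p ω) {α γ : Type*} [DecidableEq α] [DecidableEq γ]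
    {X : Ω → α} {Z : Ω → γ} {c : γ} (s : Finset α) (h : ∀ ω, X ω ∈ s → Z ω = c) :
    ∑ a ∈ s, mass p X a ≤ mass p Z c := by
  unfold mass
  rw [Finset.sum_fiberwise_eq_sum_filter Finset.univ s X p]
  exact Finset.sum_le_sum_of_subset_of_nonneg
    (by intro ω hω; simp only [Finset.mem_filter, Finset.mem_univ, true_and] at *; exact h ω hω)
    (fun i _ _ => hp i)

lemma sum_mass (hsum : ∑ ω, p ω = 1) {α : Type*} [DecidableEq α] (X : Ω → α) :
    ∑ a ∈ Finset.univ.image X, mass p X a = 1 := by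
  unfold mass
  rw [Finset.sum_fiberwise_of_maps_to (fun ω _ => Finset.mem_image_of_mem X (Finset.mem_univ ω)) p]
  exact hsum

lemma entr_eq {α : Type*} [DecidableEq α] (X : Ω → α) :
    entr p X = ∑ ω, p ω * (-Real.log (mass p X (X ω))) := by
  rw [← Finset.sum_fiberwise_of_maps_to
      (fun ω _ => Finset.mem_image_of_mem X (Finset.mem_univ ω))
      (fun ω => p ω * (-Real.log (mass p X (X ω))))]
  unfold entr
  refine Finset.sum_congr rfl fun s hs => ?_
  have h1 : ∑ ω ∈ Finset.univ.filter (fun ω => X ω = s), p ω * (-Real.log (mass p X (X ω)))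
      = ∑ ω ∈ Finset.univ.filter (fun ω => X ω = s), p ω * (-Real.log (mass p X s)) :=
    Finset.sum_congr rfl fun ω hω => by rw [(Finset.mem_filter.1 hω).2]
  rw [h1, ← Finset.sum_mul]
  show Real.negMulLog (mass p X s) = mass p X s * (-Real.log (mass p X s))
  rw [Real.negMulLog]; ring

lemma entr_le_of_factor (hp : ∀ ω, 0 ≤ p ω) {α β : Type*} [DecidableEq α] [DecidableEq β]
    {X : Ω → α} {Y : Ω → β} (h : ∀ ω ω', X ω = X ω' → Y ω = Y ω') :
    entr p Y ≤ entr p X := by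
  rw [entr_eq, entr_eq]
  refine Finset.sum_le_sum fun ω _ => ?_
  rcases eq_or_lt_of_le (hp ω) with h0 | h0
  · rw [← h0]; simp
  · have hX : 0 < mass p X (X ω) := lt_of_lt_of_le h0 (le_mass hp X ω)
    have hXY : mass p X (X ω) ≤ mass p Y (Y ω) :=
      mass_le_mass hp (fun ω' hω' => h ω' ω hω')
    have hl := Real.log_le_log hX hXY
    nlinarith

lemma entr_congr (hp : ∀ ω, 0 ≤ p ω) {α β : Type*} [DecidableEq α] [DecidableEq β]
    {X : Ω → α} {Y : Ω → β} (h : ∀ ω ω', X ω = X ω' ↔ Y ω = Y ω') :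
    entr p X = entr p Y :=
  le_antisymm (entr_le_of_factor hp (fun ω ω' hh => (h ω ω').2 hh))
    (entr_le_of_factor hp (fun ω ω' hh => (h ω ω').1 hh))


lemma entr_submod (hp : ∀ ω, 0 ≤ p ω) (hsum : ∑ ω, p ω = 1)
    {α β γ : Type*} [DecidableEq α] [DecidableEq β] [DecidableEq γ]
    (X : Ω → α) (Y : Ω → β) (Z : Ω → γ) :
    entr p (fun ω => (X ω, Y ω, Z ω)) + entr p Z ≤
      entr p (fun ω => (X ω, Z ω)) + entr p (fun ω => (Y ω, Z ω)) := by
  classical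
  set W : Ω → α × β × γ := fun ω => (X ω, Y ω, Z ω) with hWdef
  set XZ : Ω → α × γ := fun ω => (X ω, Z ω) with hXZdef
  set YZ : Ω → β × γ := fun ω => (Y ω, Z ω) with hYZdef
  set F : α × β × γ → ℝ := fun w => mass p XZ (w.1, w.2.2) * mass p YZ (w.2.1, w.2.2)
    with hFdef
  set ρ : α × β × γ → ℝ := fun w => F w / (mass p W w * mass p Z w.2.2) with hρdef
  have hFnn : ∀ w, 0 ≤ F w := fun w =>
    mul_nonneg (mass_nonneg hp _ _) (mass_nonneg hp _ _)
  have hWZ : ∀ w : α × β × γ, mass p W w ≤ mass p Z w.2.2 := fun w =>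
    mass_le_mass hp (fun ω hω => by rw [← hω])
  -- Step A : Gibbs via log x ≤ x - 1
  have hA : ∑ ω, p ω * Real.log (ρ (W ω)) ≤ (∑ ω, p ω * ρ (W ω)) - 1 := by
    have h1 : ∀ ω ∈ Finset.univ, p ω * Real.log (ρ (W ω)) ≤ p ω * ρ (W ω) - p ω := by
      intro ω _
      rcases eq_or_lt_of_le (hp ω) with h0 | h0
      · rw [← h0]; simp
      · have hmW : 0 < mass p W (W ω) := lt_of_lt_of_le h0 (le_mass hp W ω)
        have hmZ : 0 < mass p Z (Z ω) := lt_of_lt_of_le h0 (le_mass hp Z ω)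
        have hmXZ : 0 < mass p XZ (XZ ω) := lt_of_lt_of_le h0 (le_mass hp XZ ω)
        have hmYZ : 0 < mass p YZ (YZ ω) := lt_of_lt_of_le h0 (le_mass hp YZ ω)
        have hρpos : 0 < ρ (W ω) := div_pos (mul_pos hmXZ hmYZ) (mul_pos hmW hmZ)
        have := Real.log_le_sub_one_of_pos hρpos
        nlinarith
    calc ∑ ω, p ω * Real.log (ρ (W ω)) ≤ ∑ ω, (p ω * ρ (W ω) - p ω) :=
          Finset.sum_le_sum h1
      _ = (∑ ω, p ω * ρ (W ω)) - 1 := by rw [Finset.sum_sub_distrib, hsum]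
  -- Step B : group by the value of W
  have hB : ∑ ω, p ω * ρ (W ω)
      = ∑ w ∈ Finset.univ.image W, mass p W w * ρ w := by
    rw [← Finset.sum_fiberwise_of_maps_to
        (fun ω _ => Finset.mem_image_of_mem W (Finset.mem_univ ω))
        (fun ω => p ω * ρ (W ω))]
    refine Finset.sum_congr rfl fun w hw => ?_
    have h1 : ∑ ω ∈ Finset.univ.filter (fun ω => W ω = w), p ω * ρ (W ω)
        = ∑ ω ∈ Finset.univ.filter (fun ω => W ω = w), p ω * ρ w :=
      Finset.sum_congr rfl fun ω hω => by rw [(Finset.mem_filter.1 hω).2]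
    rw [h1, ← Finset.sum_mul]; rfl
  -- Step C : cancel the mass of W
  have hC : ∑ w ∈ Finset.univ.image W, mass p W w * ρ w
      ≤ ∑ w ∈ Finset.univ.image W, F w / mass p Z w.2.2 := by
    refine Finset.sum_le_sum fun w _ => ?_
    rcases eq_or_lt_of_le (mass_nonneg hp W w) with h0 | h0
    · rw [← h0, zero_mul]
      exact div_nonneg (hFnn w) (mass_nonneg hp _ _)
    · have hZ : 0 < mass p Z w.2.2 := lt_of_lt_of_le h0 (hWZ w)
      rw [hρdef]
      rw [show mass p W w * (F w / (mass p W w * mass p Z w.2.2))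
            = F w / mass p Z w.2.2 by field_simp]
  -- Step D : the remaining sum is at most 1
  have hD : ∑ w ∈ Finset.univ.image W, F w / mass p Z w.2.2 ≤ 1 := by
    have hmaps : ∀ w ∈ Finset.univ.image W, w.2.2 ∈ Finset.univ.image Z := by
      intro w hw
      obtain ⟨ω, -, rfl⟩ := Finset.mem_image.1 hw
      exact Finset.mem_image_of_mem Z (Finset.mem_univ ω)
    rw [← Finset.sum_fiberwise_of_maps_to hmaps (fun w => F w / mass p Z w.2.2)]
    have inner : ∀ z ∈ Finset.univ.image Z,
        ∑ w ∈ (Finset.univ.image W).filter (fun w => w.2.2 = z),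
          F w / mass p Z w.2.2 ≤ mass p Z z := by
      intro z hz
      set s := (Finset.univ.image W).filter (fun w => w.2.2 = z) with hsdef
      have hmem : ∀ w ∈ s, w.2.2 = z := fun w hw => (Finset.mem_filter.1 hw).2
      have h1 : ∑ w ∈ s, F w / mass p Z w.2.2
          = (∑ w ∈ s, mass p XZ (w.1, z) * mass p YZ (w.2.1, z)) / mass p Z z := by
        rw [Finset.sum_div]
        refine Finset.sum_congr rfl fun w hw => ?_
        rw [hFdef]; simp only [hmem w hw]
      rw [h1]
      set N := ∑ w ∈ s, mass p XZ (w.1, z) * mass p YZ (w.2.1, z) with hNdef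
      have hA4 : ∑ x ∈ s.image (fun w => w.1), mass p XZ (x, z) ≤ mass p Z z := by
        have hinj : ∀ x ∈ s.image (fun w => w.1), ∀ y ∈ s.image (fun w => w.1),
            (fun x => (x, z)) x = (fun x => (x, z)) y → x = y := by
          intro x _ y _ h; exact (Prod.mk.injEq _ _ _ _ ▸ h).1
        have := sum_mass_le hp (X := XZ) (Z := Z) (c := z)
          ((s.image (fun w => w.1)).image (fun x => (x, z)))
          (by intro ω hω
              obtain ⟨x, -, hx⟩ := Finset.mem_image.1 hω
              show (XZ ω).2 = z
              rw [← hx])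
        rwa [Finset.sum_image hinj] at this
      have hB4 : ∑ y ∈ s.image (fun w => w.2.1), mass p YZ (y, z) ≤ mass p Z z := by
        have hinj : ∀ x ∈ s.image (fun w => w.2.1), ∀ y ∈ s.image (fun w => w.2.1),
            (fun x => (x, z)) x = (fun x => (x, z)) y → x = y := by
          intro x _ y _ h; exact (Prod.mk.injEq _ _ _ _ ▸ h).1
        have := sum_mass_le hp (X := YZ) (Z := Z) (c := z)
          ((s.image (fun w => w.2.1)).image (fun y => (y, z)))
          (by intro ω hω
              obtain ⟨y, -, hy⟩ := Finset.mem_image.1 hω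
              show (YZ ω).2 = z
              rw [← hy])
        rwa [Finset.sum_image hinj] at this
      have hN : N ≤ mass p Z z * mass p Z z := by
        have hinj : ∀ w ∈ s, ∀ w' ∈ s,
            (fun w : α × β × γ => (w.1, w.2.1)) w = (fun w => (w.1, w.2.1)) w' → w = w' := by
          intro w hw w' hw' h
          have h1 := (Prod.mk.injEq _ _ _ _ ▸ h).1
          have h2 := (Prod.mk.injEq _ _ _ _ ▸ h).2
          have h3 : w.2.2 = w'.2.2 := by rw [hmem w hw, hmem w' hw']
          exact Prod.ext h1 (Prod.ext h2 h3)
        have e1 : N = ∑ q ∈ s.image (fun w => (w.1, w.2.1)),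
            mass p XZ (q.1, z) * mass p YZ (q.2, z) := by
          rw [Finset.sum_image hinj]
        have e2 : ∑ q ∈ s.image (fun w => (w.1, w.2.1)),
              mass p XZ (q.1, z) * mass p YZ (q.2, z)
            ≤ ∑ q ∈ (s.image (fun w => w.1)) ×ˢ (s.image (fun w => w.2.1)),
              mass p XZ (q.1, z) * mass p YZ (q.2, z) := by
          refine Finset.sum_le_sum_of_subset_of_nonneg ?_
            (fun q _ _ => mul_nonneg (mass_nonneg hp _ _) (mass_nonneg hp _ _))
          intro q hq
          obtain ⟨w, hw, rfl⟩ := Finset.mem_image.1 hq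
          exact Finset.mem_product.2
            ⟨Finset.mem_image_of_mem _ hw, Finset.mem_image_of_mem _ hw⟩
        have e3 : ∑ q ∈ (s.image (fun w => w.1)) ×ˢ (s.image (fun w => w.2.1)),
              mass p XZ (q.1, z) * mass p YZ (q.2, z)
            = (∑ x ∈ s.image (fun w => w.1), mass p XZ (x, z))
              * (∑ y ∈ s.image (fun w => w.2.1), mass p YZ (y, z)) := by
          rw [Finset.sum_product, Finset.sum_mul_sum]
        rw [e1]
        refine le_trans e2 ?_
        rw [e3]
        exact mul_le_mul hA4 hB4 (Finset.sum_nonneg fun y _ => mass_nonneg hp _ _)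
          (mass_nonneg hp _ _)
      rcases eq_or_lt_of_le (mass_nonneg hp Z z) with h0 | h0
      · rw [← h0, div_zero]
      · rw [div_le_iff₀ h0]; exact hN
    calc ∑ z ∈ Finset.univ.image Z,
          ∑ w ∈ (Finset.univ.image W).filter (fun w => w.2.2 = z),
            F w / mass p Z w.2.2
        ≤ ∑ z ∈ Finset.univ.image Z, mass p Z z := Finset.sum_le_sum inner
      _ = 1 := sum_mass hsum Z
  -- combine A-D
  have hE : ∑ ω, p ω * Real.log (ρ (W ω)) ≤ 0 := by
    rw [hB] at hA; linarith [le_trans hC hD]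
  -- termwise identity
  have hid : ∀ ω ∈ Finset.univ,
      p ω * (-Real.log (mass p W (W ω))) + p ω * (-Real.log (mass p Z (Z ω)))
      = p ω * (-Real.log (mass p XZ (XZ ω))) + p ω * (-Real.log (mass p YZ (YZ ω)))
        + p ω * Real.log (ρ (W ω)) := by
    intro ω _
    rcases eq_or_lt_of_le (hp ω) with h0 | h0
    · rw [← h0]; ring
    · have hmW : 0 < mass p W (W ω) := lt_of_lt_of_le h0 (le_mass hp W ω)
      have hmZ : 0 < mass p Z (Z ω) := lt_of_lt_of_le h0 (le_mass hp Z ω)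
      have hmXZ : 0 < mass p XZ (XZ ω) := lt_of_lt_of_le h0 (le_mass hp XZ ω)
      have hmYZ : 0 < mass p YZ (YZ ω) := lt_of_lt_of_le h0 (le_mass hp YZ ω)
      have hρ : ρ (W ω) = mass p XZ (XZ ω) * mass p YZ (YZ ω)
          / (mass p W (W ω) * mass p Z (Z ω)) := rfl
      rw [hρ, Real.log_div (by positivity) (by positivity),
        Real.log_mul hmXZ.ne' hmYZ.ne', Real.log_mul hmW.ne' hmZ.ne']
      ring
  have hsplit : ∑ ω, (p ω * (-Real.log (mass p W (W ω))) + p ω * (-Real.log (mass p Z (Z ω))))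
      = ∑ ω, (p ω * (-Real.log (mass p XZ (XZ ω))) + p ω * (-Real.log (mass p YZ (YZ ω)))
        + p ω * Real.log (ρ (W ω))) := Finset.sum_congr rfl hid
  rw [entr_eq (X := W), entr_eq (X := Z), entr_eq (X := XZ), entr_eq (X := YZ)]
  rw [← Finset.sum_add_distrib, ← Finset.sum_add_distrib, hsplit]
  rw [Finset.sum_add_distrib]
  linarith [hE]


lemma entr_const (hsum : ∑ ω, p ω = 1) {α : Type*} [DecidableEq α]
    {X : Ω → α} (h : ∀ ω ω', X ω = X ω') : entr p X = 0 := by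
  have hΩ : Nonempty Ω := by
    by_contra hne
    rw [not_nonempty_iff] at hne
    rw [Finset.univ_eq_empty, Finset.sum_empty] at hsum
    norm_num at hsum
  obtain ⟨ω₀⟩ := hΩ
  have himg : Finset.univ.image X = {X ω₀} := by
    ext a
    simp only [Finset.mem_image, Finset.mem_univ, true_and, Finset.mem_singleton]
    constructor
    · rintro ⟨ω, rfl⟩; exact h ω ω₀
    · rintro rfl; exact ⟨ω₀, rfl⟩
  rw [entr, himg, Finset.sum_singleton]
  have hfil : Finset.univ.filter (fun ω => X ω = X ω₀) = Finset.univ := by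
    ext ω; simp [h ω ω₀]
  rw [hfil, hsum, Real.negMulLog_one]

end EM

lemma joint_eq_iff {V Ω T : Type*} (S : V → Ω → T) (A : Finset V) (ω ω' : Ω) :
    joint S A ω = joint S A ω' ↔ ∀ v ∈ A, S v ω = S v ω' := by
  constructor
  · intro h v hv; exact congrFun h ⟨v, hv⟩
  · intro h; funext a; exact h a.1 a.2


private lemma div_le_div_of_nonneg_right' {a b c : ℝ} (h : a ≤ b) (hc : 0 < c) :
    a / c ≤ b / c := by
  apply div_le_div_of_nonneg_right h hc.le

theorem entropy_method_properties {V Ω T : Type*} [Fintype Ω] [DecidableEq T]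
    (G : SimpleGraph V) (p : Ω → ℝ)
    (hp : ∀ ω, 0 ≤ p ω) (hsum : ∑ ω, p ω = 1)
    (S : V → Ω → T) (ξ : Ω → T)
    (hξ : 0 < entr p ξ)
    (hdet : ∀ u v, G.Adj u v →
      entr p (fun ω => (S u ω, S v ω, ξ ω)) = entr p (fun ω => (S u ω, S v ω)))
    (hind : ∀ A : Finset V, ¬ Qualified G A →
      entr p (fun ω => (joint S A ω, ξ ω)) = entr p (joint S A) + entr p ξ) :
    (fun A : Finset V => entr p (joint S A) / entr p ξ) ∅ = 0 ∧
    (∀ A B : Finset V, B ⊆ A →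
      entr p (joint S B) / entr p ξ ≤ entr p (joint S A) / entr p ξ) ∧
    (∀ A B : Finset V,
      entr p (joint S (A ∪ B)) / entr p ξ + entr p (joint S (A ∩ B)) / entr p ξ ≤
        entr p (joint S A) / entr p ξ + entr p (joint S B) / entr p ξ) ∧
    (∀ A B : Finset V, B ⊆ A → Qualified G A → ¬ Qualified G B →
      entr p (joint S B) / entr p ξ + 1 ≤ entr p (joint S A) / entr p ξ) ∧
    (∀ A B : Finset V, Qualified G A → Qualified G B → ¬ Qualified G (A ∩ B) →
      entr p (joint S (A ∪ B)) / entr p ξ + entr p (joint S (A ∩ B)) / entr p ξ + 1 ≤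
        entr p (joint S A) / entr p ξ + entr p (joint S B) / entr p ξ) := by
  classical
  set k := entr p ξ with hk
  -- monotonicity of unnormalized entropy
  have hmono : ∀ A B : Finset V, B ⊆ A → entr p (joint S B) ≤ entr p (joint S A) := by
    intro A B hBA
    refine EM.entr_le_of_factor hp (fun ω ω' h => ?_)
    rw [joint_eq_iff] at h ⊢
    exact fun v hv => h v (hBA hv)
  -- submodularity of unnormalized entropy
  have hsub : ∀ A B : Finset V,
      entr p (joint S (A ∪ B)) + entr p (joint S (A ∩ B)) ≤
        entr p (joint S A) + entr p (joint S B) := by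
    intro A B
    have h5 := EM.entr_submod hp hsum (joint S A) (joint S B) (joint S (A ∩ B))
    have e1 : entr p (fun ω => (joint S A ω, joint S (A ∩ B) ω)) = entr p (joint S A) := by
      refine EM.entr_congr hp (fun ω ω' => ?_)
      simp only [Prod.mk.injEq, joint_eq_iff]
      constructor
      · rintro ⟨h1, -⟩; exact h1
      · intro h1
        exact ⟨h1, fun v hv => h1 v (Finset.mem_of_mem_inter_left hv)⟩
    have e2 : entr p (fun ω => (joint S B ω, joint S (A ∩ B) ω)) = entr p (joint S B) := by
      refine EM.entr_congr hp (fun ω ω' => ?_)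
      simp only [Prod.mk.injEq, joint_eq_iff]
      constructor
      · rintro ⟨h1, -⟩; exact h1
      · intro h1
        exact ⟨h1, fun v hv => h1 v (Finset.mem_of_mem_inter_right hv)⟩
    have e3 : entr p (fun ω => (joint S A ω, joint S B ω, joint S (A ∩ B) ω))
        = entr p (joint S (A ∪ B)) := by
      refine EM.entr_congr hp (fun ω ω' => ?_)
      simp only [Prod.mk.injEq, joint_eq_iff]
      constructor
      · rintro ⟨h1, h2, -⟩
        intro v hv
        rcases Finset.mem_union.1 hv with hv | hv
        · exact h1 v hv
        · exact h2 v hv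
      · intro h1
        refine ⟨fun v hv => h1 v (Finset.mem_union_left _ hv),
          fun v hv => h1 v (Finset.mem_union_right _ hv),
          fun v hv => h1 v (Finset.mem_union_left _ (Finset.mem_of_mem_inter_left hv))⟩
    rw [e1, e2, e3] at h5
    exact h5
  -- for qualified sets, the shares determine the secret
  have hQ : ∀ A : Finset V, Qualified G A →
      entr p (fun ω => (joint S A ω, ξ ω)) = entr p (joint S A) := by
    rintro A ⟨u, hu, v, hv, huv⟩
    refine le_antisymm ?_
      (EM.entr_le_of_factor hp (fun ω ω' h => congrArg Prod.fst h))
    have h5 := EM.entr_submod hp hsum (joint S A) ξ (fun ω => (S u ω, S v ω))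
    have e1 : entr p (fun ω => (joint S A ω, (S u ω, S v ω))) = entr p (joint S A) := by
      refine EM.entr_congr hp (fun ω ω' => ?_)
      simp only [Prod.mk.injEq, joint_eq_iff]
      constructor
      · rintro ⟨h1, -⟩; exact h1
      · intro h1; exact ⟨h1, h1 u hu, h1 v hv⟩
    have e2 : entr p (fun ω => (ξ ω, (S u ω, S v ω)))
        = entr p (fun ω => (S u ω, S v ω)) := by
      rw [← hdet u v huv]
      refine EM.entr_congr hp (fun ω ω' => ?_)
      simp only [Prod.mk.injEq]
      tauto
    have e3 : entr p (fun ω => (joint S A ω, ξ ω, (S u ω, S v ω)))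
        = entr p (fun ω => (joint S A ω, ξ ω)) := by
      refine EM.entr_congr hp (fun ω ω' => ?_)
      simp only [Prod.mk.injEq, joint_eq_iff]
      constructor
      · rintro ⟨h1, h2, -⟩; exact ⟨h1, h2⟩
      · rintro ⟨h1, h2⟩; exact ⟨h1, h2, h1 u hu, h1 v hv⟩
    rw [e1, e2, e3] at h5
    linarith
  -- property (d), unnormalized
  have hd : ∀ A B : Finset V, B ⊆ A → Qualified G A → ¬ Qualified G B →
      entr p (joint S B) + k ≤ entr p (joint S A) := by
    intro A B hBA hA hB
    have h1 : entr p (fun ω => (joint S B ω, ξ ω))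
        ≤ entr p (fun ω => (joint S A ω, ξ ω)) := by
      refine EM.entr_le_of_factor hp (fun ω ω' h => ?_)
      simp only [Prod.mk.injEq, joint_eq_iff] at h ⊢
      exact ⟨fun v hv => h.1 v (hBA hv), h.2⟩
    rw [hind B hB, hQ A hA] at h1
    exact h1
  -- property (e), unnormalized
  have he : ∀ A B : Finset V, Qualified G A → Qualified G B → ¬ Qualified G (A ∩ B) →
      entr p (joint S (A ∪ B)) + entr p (joint S (A ∩ B)) + k ≤
        entr p (joint S A) + entr p (joint S B) := by
    intro A B hA hB hAB
    have h5 := EM.entr_submod hp hsum (joint S A) (joint S B)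
      (fun ω => (joint S (A ∩ B) ω, ξ ω))
    have e1 : entr p (fun ω => (joint S A ω, (joint S (A ∩ B) ω, ξ ω)))
        = entr p (fun ω => (joint S A ω, ξ ω)) := by
      refine EM.entr_congr hp (fun ω ω' => ?_)
      simp only [Prod.mk.injEq, joint_eq_iff]
      constructor
      · rintro ⟨h1, -, h2⟩; exact ⟨h1, h2⟩
      · rintro ⟨h1, h2⟩
        exact ⟨h1, fun v hv => h1 v (Finset.mem_of_mem_inter_left hv), h2⟩
    have e2 : entr p (fun ω => (joint S B ω, (joint S (A ∩ B) ω, ξ ω)))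
        = entr p (fun ω => (joint S B ω, ξ ω)) := by
      refine EM.entr_congr hp (fun ω ω' => ?_)
      simp only [Prod.mk.injEq, joint_eq_iff]
      constructor
      · rintro ⟨h1, -, h2⟩; exact ⟨h1, h2⟩
      · rintro ⟨h1, h2⟩
        exact ⟨h1, fun v hv => h1 v (Finset.mem_of_mem_inter_right hv), h2⟩
    have e3 : entr p (joint S (A ∪ B)) ≤
        entr p (fun ω => (joint S A ω, joint S B ω, (joint S (A ∩ B) ω, ξ ω))) := by
      refine EM.entr_le_of_factor hp (fun ω ω' h => ?_)
      simp only [Prod.mk.injEq, joint_eq_iff] at h ⊢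
      intro v hv
      rcases Finset.mem_union.1 hv with hv | hv
      · exact h.1 v hv
      · exact h.2.1 v hv
    have e4 : entr p (fun ω => (joint S (A ∩ B) ω, ξ ω))
        = entr p (joint S (A ∩ B)) + k := hind (A ∩ B) hAB
    rw [e1, e2, e4, hQ A hA, hQ B hB] at h5
    linarith
  have hone : (1 : ℝ) = k / k := (div_self hξ.ne').symm
  refine ⟨?_, ?_, ?_, ?_, ?_⟩
  · show entr p (joint S ∅) / k = 0
    have h0 : entr p (joint S (∅ : Finset V)) = 0 :=
      EM.entr_const hsum (fun ω ω' => funext fun a => absurd a.2 (Finset.notMem_empty a.1))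
    rw [h0, zero_div]
  · intro A B hBA
    exact div_le_div_of_nonneg_right' (hmono A B hBA) hξ
  · intro A B
    rw [← add_div, ← add_div]
    exact div_le_div_of_nonneg_right' (hsub A B) hξ
  · intro A B hBA hA hB
    rw [hone, ← add_div]
    exact div_le_div_of_nonneg_right' (hd A B hBA hA hB) hξ
  · intro A B hA hB hAB
    rw [hone, ← add_div, ← add_div, ← add_div]
    exact div_le_div_of_nonneg_right' (he A B hA hB hAB) hξ
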